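/- Every AG*-band is a semigroup; that is, if a magma S satisfies the left invertive law, the AG* identity (a·b)·c = b·(a·c), and every element is idempotent (a·a = a for all a), then S is associative: (a·b)·c = a·(b·c) for all a,b,c. -/
import Mathlib

theorem AG_star_band_is_semigroup {S : Type*} [Mul S]
    (li : ∀ a b c : S, (a * b) * c = (c * b) * a)
    (ags : ∀ a b c : S, (a * b) * c = b * (a * c))
    (idem : ∀ a : S, a * a = a) :
    ∀ a b c : S, (a * b) * c = a * (b * c) := by
  have comm : ∀ a b : S, a * b = b * a := by
    intro a b
    have h1 : a * (a * b) = a * b := by rw [← ags a a b, idem]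
    calc a * b = (a * b) * (a * b) := (idem _).symm
      _ = b * (a * (a * b)) := ags a b (a * b)
      _ = b * (a * b) := by rw [h1]
      _ = (a * b) * b := (ags a b b).symm
      _ = (b * b) * a := li a b b
      _ = b * a := by rw [idem]
  intro a b c
  rw [comm a b, ags b a c]
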